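/- Let D = {r_n : n ∈ ℕ} be a countably infinite discrete space. Define G : ℕ × CL(D) → (opens of CL(D)) by: if A = {r_{n₁},…,r_{n_k}} is finite with n₁ < … < n_k, set G(m, A) = ⟨{r_{n₁}},…,{r_{n_k}}⟩ for all m; if A = {r_{n_i} : i ∈ ℕ} is infinite with n_i increasing, set G(m, A) = ⟨{r_{n₁}},…,{r_{n_m}}, A⟩. Then (i) for each A, the family {G(m, A) : m ∈ ℕ} is a neighborhood base at A in CL(D) with the Vietoris topology, and (ii) for each A and m, if B ∈ G(m, A) then G(m, B) ⊆ G(m, A). Consequently CL(D) is non-archimedean quasi-metrizable. -/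

import Mathlib

open Set TopologicalSpace

/-- The hyperspace of nonempty closed subsets of `X`. -/
def CL (X : Type*) [TopologicalSpace X] : Type _ :=
  {A : Set X // A.Nonempty ∧ IsClosed A}

/-- The Vietoris topology on `CL X`. -/
instance CL.instTopologicalSpace (X : Type*) [TopologicalSpace X] :
    TopologicalSpace (CL X) :=
  .generateFrom
    ({S | ∃ U : Set X, IsOpen U ∧ S = {K : CL X | K.1 ⊆ U}} ∪
     {S | ∃ U : Set X, IsOpen U ∧ S = {K : CL X | (K.1 ∩ U).Nonempty}})

/-- Non-archimedean quasi-metrizability via a `g`-function. -/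
def NAQuasiMetrizable (Y : Type*) [TopologicalSpace Y] : Prop :=
  ∃ g : ℕ → Y → Set Y,
    (∀ n y, IsOpen (g n y) ∧ y ∈ g n y) ∧
    (∀ n y, g (n + 1) y ⊆ g n y) ∧
    (∀ y U, IsOpen U → y ∈ U → ∃ n, g n y ⊆ U) ∧
    ∀ n x y, y ∈ g n x → g n y ⊆ g n x

open scoped Classical in
/-- For an enumeration `r` of `D`: all of `A` if `A` is finite, and otherwise
the first `m` elements of `A` in the enumeration order. -/
noncomputable def firstElts {D : Type*} (r : ℕ ≃ D) (m : ℕ) (A : Set D) : Set D :=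
  if A.Finite then A
  else {x ∈ A | ({y ∈ A | r.symm y < r.symm x}).ncard < m}

/-- `G(m, A) = ⟨{a₁},…,{a_k}⟩` for finite `A = {a₁,…,a_k}` and
`G(m, A) = ⟨{a₁},…,{a_m}, A⟩` for infinite `A` (elements enumerated in
increasing order of indices). -/
noncomputable def GG {D : Type*} [TopologicalSpace D] (r : ℕ ≃ D) (m : ℕ)
    (A : CL D) : Set (CL D) :=
  {K : CL D | K.1 ⊆ A.1 ∧ firstElts r m A.1 ⊆ K.1}

section Aux

variable {D : Type*}

lemma preds_finite (r : ℕ ≃ D) (A : Set D) (x : D) :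
    {y ∈ A | r.symm y < r.symm x}.Finite := by
  apply ((Set.finite_Iio (r.symm x)).image r).subset
  rintro y ⟨-, hy⟩
  exact ⟨r.symm y, hy, r.apply_symm_apply y⟩

lemma preds_ncard_lt (r : ℕ ≃ D) (A : Set D) {x x' : D} (hx : x ∈ A)
    (h : r.symm x < r.symm x') :
    {y ∈ A | r.symm y < r.symm x}.ncard < {y ∈ A | r.symm y < r.symm x'}.ncard := by
  refine Set.ncard_lt_ncard ⟨fun y ⟨hyA, hy⟩ => ⟨hyA, hy.trans h⟩, fun hsub => ?_⟩
    (preds_finite r A x')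
  exact lt_irrefl _ (hsub ⟨hx, h⟩).2

lemma firstElts_subset (r : ℕ ≃ D) (m : ℕ) (A : Set D) : firstElts r m A ⊆ A := by
  unfold firstElts
  split
  · exact subset_rfl
  · exact fun x hx => hx.1

lemma firstElts_finite (r : ℕ ≃ D) (m : ℕ) (A : Set D) : (firstElts r m A).Finite := by
  unfold firstElts
  split
  · assumption
  · set f : D → ℕ := fun x => {y ∈ A | r.symm y < r.symm x}.ncard with hf
    apply Set.Finite.of_finite_image (f := f)
    · apply (Set.finite_Iio m).subset
      rintro n ⟨x, hx, rfl⟩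
      exact hx.2
    · intro x hx x' hx' heq
      rcases lt_trichotomy (r.symm x) (r.symm x') with h | h | h
      · exact absurd heq (preds_ncard_lt r A hx.1 h).ne
      · exact r.symm.injective h
      · exact absurd heq.symm (preds_ncard_lt r A hx'.1 h).ne

lemma firstElts_mono (r : ℕ ≃ D) {m m' : ℕ} (h : m ≤ m') (A : Set D) :
    firstElts r m A ⊆ firstElts r m' A := by
  unfold firstElts
  split
  · exact subset_rfl
  · exact fun x hx => ⟨hx.1, hx.2.trans_le h⟩

lemma mem_firstElts_of_finite (r : ℕ ≃ D) (m : ℕ) {A : Set D} (hA : A.Finite) :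
    firstElts r m A = A := by
  unfold firstElts; rw [if_pos hA]

lemma exists_mem_firstElts (r : ℕ ≃ D) {A : Set D} {a : D} (ha : a ∈ A) :
    ∃ m, a ∈ firstElts r m A := by
  by_cases hA : A.Finite
  · exact ⟨0, by rw [mem_firstElts_of_finite r 0 hA]; exact ha⟩
  · refine ⟨{y ∈ A | r.symm y < r.symm a}.ncard + 1, ?_⟩
    unfold firstElts
    rw [if_neg hA]
    exact ⟨ha, Nat.lt_succ_self _⟩

variable [TopologicalSpace D]

lemma isOpen_subset_gen (U : Set D) (hU : IsOpen U) :
    IsOpen {K : CL D | K.1 ⊆ U} :=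
  TopologicalSpace.GenerateOpen.basic _ (Or.inl ⟨U, hU, rfl⟩)

lemma isOpen_inter_gen (U : Set D) (hU : IsOpen U) :
    IsOpen {K : CL D | (K.1 ∩ U).Nonempty} :=
  TopologicalSpace.GenerateOpen.basic _ (Or.inr ⟨U, hU, rfl⟩)

lemma GG_antitone (r : ℕ ≃ D) {m m' : ℕ} (h : m ≤ m') (A : CL D) :
    GG r m' A ⊆ GG r m A :=
  fun _ hK => ⟨hK.1, (firstElts_mono r h A.1).trans hK.2⟩

variable [DiscreteTopology D]

lemma GG_isOpen (r : ℕ ≃ D) (m : ℕ) (A : CL D) : IsOpen (GG r m A) := by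
  have : GG r m A =
      {K : CL D | K.1 ⊆ A.1} ∩ ⋂ x ∈ firstElts r m A.1, {K : CL D | (K.1 ∩ {x}).Nonempty} := by
    ext K
    simp only [GG, Set.mem_setOf_eq, Set.mem_inter_iff, Set.mem_iInter, Set.subset_def,
      Set.inter_nonempty_iff_exists_left]
    constructor
    · exact fun ⟨h1, h2⟩ => ⟨h1, fun x hx => ⟨x, h2 x hx, rfl⟩⟩
    · rintro ⟨h1, h2⟩
      refine ⟨h1, fun x hx => ?_⟩
      obtain ⟨y, hy, rfl⟩ := h2 x hx
      exact hy
  rw [this]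
  exact (isOpen_subset_gen _ (isOpen_discrete _)).inter
    ((firstElts_finite r m A.1).isOpen_biInter fun x _ =>
      isOpen_inter_gen _ (isOpen_discrete _))

omit [DiscreteTopology D] in
lemma GG_subbase (r : ℕ ≃ D) (A : CL D) {t : Set (CL D)}
    (ht : t ∈ ({S | ∃ U : Set D, IsOpen U ∧ S = {K : CL D | K.1 ⊆ U}} ∪
     {S | ∃ U : Set D, IsOpen U ∧ S = {K : CL D | (K.1 ∩ U).Nonempty}}))
    (hA : A ∈ t) : ∃ m, GG r m A ⊆ t := by
  rcases ht with ⟨U, -, rfl⟩ | ⟨U, -, rfl⟩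
  · exact ⟨0, fun K hK => hK.1.trans hA⟩
  · obtain ⟨a, haA, haU⟩ := hA
    obtain ⟨m, hm⟩ := exists_mem_firstElts r haA
    exact ⟨m, fun K hK => ⟨a, hK.2 hm, haU⟩⟩

end Aux

/-- For a countably infinite discrete space `D`, the function `G` gives open
neighborhoods forming a base at each point of `CL D`, with `B ∈ G(m, A)`
implying `G(m, B) ⊆ G(m, A)`; consequently `CL D` is non-archimedean
quasi-metrizable. -/
theorem hyperspace_discrete_naQuasiMetrizable
    (D : Type*) [TopologicalSpace D] [DiscreteTopology D] (r : ℕ ≃ D) :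
    (∀ (m : ℕ) (A : CL D), IsOpen (GG r m A) ∧ A ∈ GG r m A) ∧
    (∀ (A : CL D) (S : Set (CL D)), IsOpen S → A ∈ S → ∃ m, GG r m A ⊆ S) ∧
    (∀ (m : ℕ) (A B : CL D), B ∈ GG r m A → GG r m B ⊆ GG r m A) ∧
    NAQuasiMetrizable (CL D) := by
  have h1 : ∀ (m : ℕ) (A : CL D), IsOpen (GG r m A) ∧ A ∈ GG r m A := fun m A =>
    ⟨GG_isOpen r m A, subset_rfl, firstElts_subset r m A.1⟩
  have h2 : ∀ (A : CL D) (S : Set (CL D)), IsOpen S → A ∈ S → ∃ m, GG r m A ⊆ S := by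
    intro A S hS hAS
    obtain ⟨v, ⟨f, ⟨hfin, hfsub⟩, rfl⟩, hAv, hvS⟩ :=
      (isTopologicalBasis_of_subbasis rfl).exists_subset_of_mem_open hAS hS
    have key : ∀ f : Set (Set (CL D)), f.Finite →
        f ⊆ ({S | ∃ U : Set D, IsOpen U ∧ S = {K : CL D | K.1 ⊆ U}} ∪
          {S | ∃ U : Set D, IsOpen U ∧ S = {K : CL D | (K.1 ∩ U).Nonempty}}) →
        A ∈ ⋂₀ f → ∃ m, ∀ t ∈ f, GG r m A ⊆ t := by
      intro f hfin
      refine Set.Finite.induction_on (motive := fun f _ => f ⊆ ({S | ∃ U : Set D, IsOpen U ∧ S = {K : CL D | K.1 ⊆ U}} ∪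
          {S | ∃ U : Set D, IsOpen U ∧ S = {K : CL D | (K.1 ∩ U).Nonempty}}) →
        A ∈ ⋂₀ f → ∃ m, ∀ t ∈ f, GG r m A ⊆ t) f hfin ?_ ?_
      · exact fun _ _ => ⟨0, fun t ht => absurd ht (Set.notMem_empty t)⟩
      · intro t f htf hf ih hsub hAv
        obtain ⟨M, hM⟩ := ih ((Set.subset_insert t f).trans hsub)
          ((Set.sInter_subset_sInter (Set.subset_insert t f)) hAv)
        obtain ⟨m, hm⟩ := GG_subbase r A (hsub (Set.mem_insert t f))
          (hAv t (Set.mem_insert t f))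
        refine ⟨max m M, fun s hs => ?_⟩
        rcases hs with rfl | hs
        · exact (GG_antitone r (le_max_left m M) A).trans hm
        · exact (GG_antitone r (le_max_right m M) A).trans (hM s hs)
    obtain ⟨m, hm⟩ := key f hfin hfsub hAv
    exact ⟨m, fun K hK => hvS (Set.mem_sInter.2 fun t ht => hm t ht hK)⟩
  have h3 : ∀ (m : ℕ) (A B : CL D), B ∈ GG r m A → GG r m B ⊆ GG r m A := by
    intro m A B ⟨hBA, hAB⟩ K ⟨hKB, hBK⟩
    refine ⟨hKB.trans hBA, ?_⟩
    by_cases hA : A.1.Finite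
    · -- then B.1 = A.1
      have hfA : firstElts r m A.1 = A.1 := mem_firstElts_of_finite r m hA
      have hBeq : B.1 = A.1 := le_antisymm hBA (by rw [← hfA]; exact hAB)
      have hfB : firstElts r m B.1 = B.1 := mem_firstElts_of_finite r m (hBeq ▸ hA)
      rw [hfA, ← hBeq, ← hfB]
      exact hBK
    · intro x hx
      apply hBK
      have hxA : x ∈ A.1 ∧ {y ∈ A.1 | r.symm y < r.symm x}.ncard < m := by
        have := hx; unfold firstElts at this; rwa [if_neg hA] at this
      have hxB : x ∈ B.1 := hAB hx
      by_cases hB : B.1.Finite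
      · rw [mem_firstElts_of_finite r m hB]; exact hxB
      · unfold firstElts
        rw [if_neg hB]
        refine ⟨hxB, lt_of_le_of_lt (Set.ncard_le_ncard ?_ (preds_finite r A.1 x)) hxA.2⟩
        exact fun y ⟨hy, hy'⟩ => ⟨hBA hy, hy'⟩
  refine ⟨h1, h2, h3, fun n => GG r n, h1, fun n A => GG_antitone r (Nat.le_succ n) A,
    fun A S hS hAS => h2 A S hS hAS, h3⟩
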